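/- arXiv:1701.06788 — 2 statements merged into one kernel-verified Lean document; each statement's English description precedes it below -/
import Mathlib

section
/- Let X and Y be topological spaces and f : X → Y a continuous map with the following lifting-up-to-homotopy property: for every n ≥ 0 and every pair of continuous maps g : S^n → X and G : D^{n+1} → Y (where S^n is the unit sphere and D^{n+1} the closed unit ball in (n+1)-dimensional Euclidean space) such that the restriction of G to S^n equals f ∘ g, there exists a continuous map L : D^{n+1} → X whose restriction to S^n is homotopic (as a map S^n → X) to g. Then for every n ≥ 0 and every continuous map g : S^n → X such that f ∘ g extends to a continuous map D^{n+1} → Y, the map g itself extends to a continuous map D^{n+1} → X. -/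
open Metric

/-- The continuous inclusion of the unit sphere `S^n` into the closed unit ball `D^{n+1}`
in `ℝ^{n+1}`. -/
noncomputable def sphereInclusion (n : ℕ) :
    C(sphere (0 : EuclideanSpace ℝ (Fin (n + 1))) 1,
      closedBall (0 : EuclideanSpace ℝ (Fin (n + 1))) 1) :=
  ⟨Set.inclusion sphere_subset_closedBall, continuous_inclusion sphere_subset_closedBall⟩

/-- If `f : X → Y` has the property that in every commutative square formed by
`g : S^n → X` and `G : D^{n+1} → Y` there is a lift `L : D^{n+1} → X` whose restriction
to `S^n` is homotopic to `g`, then any `g : S^n → X` such that `f ∘ g` extends to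
`D^{n+1}` itself extends to `D^{n+1}`. -/
theorem extension_of_semiEquivalence {X Y : Type*} [TopologicalSpace X] [TopologicalSpace Y]
    (f : C(X, Y))
    (hf : ∀ (n : ℕ) (g : C(sphere (0 : EuclideanSpace ℝ (Fin (n + 1))) 1, X))
        (G : C(closedBall (0 : EuclideanSpace ℝ (Fin (n + 1))) 1, Y)),
        (∀ x, G (sphereInclusion n x) = f (g x)) →
        ∃ L : C(closedBall (0 : EuclideanSpace ℝ (Fin (n + 1))) 1, X),
          (L.comp (sphereInclusion n)).Homotopic g) :
    ∀ (n : ℕ) (g : C(sphere (0 : EuclideanSpace ℝ (Fin (n + 1))) 1, X)),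
      (∃ G : C(closedBall (0 : EuclideanSpace ℝ (Fin (n + 1))) 1, Y),
        ∀ x, G (sphereInclusion n x) = f (g x)) →
      ∃ g' : C(closedBall (0 : EuclideanSpace ℝ (Fin (n + 1))) 1, X),
        ∀ x, g' (sphereInclusion n x) = g x := by
  classical
  intro n g hG
  obtain ⟨G, hGcomm⟩ := hG
  obtain ⟨L, hL⟩ := hf n g G hGcomm
  obtain ⟨H⟩ := hL
  set E := EuclideanSpace ℝ (Fin (n + 1)) with hE
  -- membership lemmas
  have memBall : ∀ (c : ℝ), 0 ≤ c → c ≤ 1 → ∀ s : sphere (0 : E) 1,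
      c • (s : E) ∈ closedBall (0 : E) 1 := by
    intro c hc0 hc1 s
    rw [mem_closedBall_zero_iff, norm_smul, mem_sphere_zero_iff_norm.mp s.2, mul_one,
      Real.norm_of_nonneg hc0]
    exact hc1
  -- the glued map on I × S
  set F : unitInterval × sphere (0 : E) 1 → X := fun p =>
    if (p.1 : ℝ) ≤ 1 / 2 then
      L ⟨(min (2 * (p.1 : ℝ)) 1) • (p.2 : E),
        memBall _ (le_min (mul_nonneg two_pos.le p.1.2.1) one_pos.le) (min_le_right _ _) p.2⟩
    else H (Set.projIcc 0 1 zero_le_one (2 * (p.1 : ℝ) - 1), p.2) with hFdef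
  have hFcont : Continuous F := by
    apply Continuous.if_le
    · exact L.continuous.comp (Continuous.subtype_mk (by fun_prop) _)
    · exact H.continuous.comp
        ((continuous_projIcc.comp (by fun_prop)).prodMk continuous_snd)
    · fun_prop
    · exact continuous_const
    · rintro ⟨t, s⟩ ht
      simp only at ht
      have h2t : 2 * (t : ℝ) = 1 := by rw [ht]; ring
      have hmin : min (2 * (t : ℝ)) 1 = 1 := by rw [h2t, min_self]
      have hpr : Set.projIcc (0:ℝ) 1 zero_le_one (2 * (t : ℝ) - 1) = 0 := by
        rw [h2t]; norm_num [Set.projIcc]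
      simp only [hmin, hpr]
      rw [H.apply_zero]
      show L _ = L (sphereInclusion n s)
      congr 1
      exact Subtype.ext (one_smul ℝ (s : E))
  -- values of F at the endpoints
  have hF1 : ∀ s : sphere (0 : E) 1, F (1, s) = g s := by
    intro s
    have : ¬ ((1 : ℝ) ≤ 1 / 2) := by norm_num
    simp only [hFdef]
    rw [if_neg (by norm_num)]
    have hpr : Set.projIcc (0:ℝ) 1 zero_le_one (2 * ((1 : unitInterval) : ℝ) - 1) = 1 := by
      norm_num [Set.projIcc]
    rw [hpr, H.apply_one]
  -- the quotient map q : I × S → D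
  have memq : ∀ p : unitInterval × sphere (0 : E) 1,
      ((p.1 : ℝ)) • (p.2 : E) ∈ closedBall (0 : E) 1 :=
    fun p => memBall _ p.1.2.1 p.1.2.2 p.2
  set q : unitInterval × sphere (0 : E) 1 → closedBall (0 : E) 1 :=
    fun p => ⟨((p.1 : ℝ)) • (p.2 : E), memq p⟩ with hqdef
  have hqcont : Continuous q := Continuous.subtype_mk (by fun_prop) _
  have hqsurj : Function.Surjective q := by
    rintro ⟨x, hx⟩
    by_cases hx0 : x = 0
    · refine ⟨(0, ⟨EuclideanSpace.single 0 1, ?_⟩), ?_⟩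
      · rw [mem_sphere_zero_iff_norm, EuclideanSpace.norm_single, norm_one]
      · apply Subtype.ext
        simp [hqdef, hx0]
    · have hnx : ‖x‖ ≠ 0 := norm_ne_zero_iff.mpr hx0
      refine ⟨(⟨‖x‖, norm_nonneg x, mem_closedBall_zero_iff.mp hx⟩,
        ⟨‖x‖⁻¹ • x, ?_⟩), ?_⟩
      · rw [mem_sphere_zero_iff_norm, norm_smul, norm_inv, norm_norm,
          inv_mul_cancel₀ hnx]
      · apply Subtype.ext
        show ‖x‖ • ‖x‖⁻¹ • x = x
        rw [smul_smul, mul_inv_cancel₀ hnx, one_smul]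
  have hquot : Topology.IsQuotientMap q :=
    Topology.IsQuotientMap.of_surjective_continuous hqsurj hqcont
  -- the extension
  set g'fun : closedBall (0 : E) 1 → X := fun x =>
    if h : (x : E) = 0 then L ⟨0, by simp⟩
    else F (⟨‖(x : E)‖, norm_nonneg _, mem_closedBall_zero_iff.mp x.2⟩,
      ⟨‖(x : E)‖⁻¹ • (x : E), by
        rw [mem_sphere_zero_iff_norm, norm_smul, norm_inv, norm_norm,
          inv_mul_cancel₀ (norm_ne_zero_iff.mpr h)]⟩) with hg'def
  have hkey : g'fun ∘ q = F := by
    funext p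
    obtain ⟨t, s⟩ := p
    have hs1 : ‖(s : E)‖ = 1 := mem_sphere_zero_iff_norm.mp s.2
    by_cases h0 : ((t : ℝ)) • (s : E) = 0
    · have ht0 : (t : ℝ) = 0 := by
        rcases smul_eq_zero.mp h0 with h | h
        · exact h
        · exact absurd h (by intro hh; rw [hh, norm_zero] at hs1; norm_num at hs1)
      show g'fun ⟨((t : ℝ)) • (s : E), _⟩ = F (t, s)
      rw [hg'def]
      simp only [dif_pos h0]
      -- compute F (t, s)
      have hc : ((t : ℝ)) ≤ 1 / 2 := by rw [ht0]; norm_num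
      simp only [hFdef]
      rw [if_pos hc]
      congr 1
      apply Subtype.ext
      show (0 : E) = (min (2 * (t : ℝ)) 1) • (s : E)
      rw [ht0]
      norm_num
    · have htne : (t : ℝ) ≠ 0 := by
        intro hh; exact h0 (by rw [hh, zero_smul])
      have hnorm : ‖((t : ℝ)) • (s : E)‖ = (t : ℝ) := by
        rw [norm_smul, hs1, mul_one, Real.norm_of_nonneg t.2.1]
      show g'fun ⟨((t : ℝ)) • (s : E), _⟩ = F (t, s)
      rw [hg'def]
      simp only [dif_neg h0]
      exact congrArg F (Prod.ext (Subtype.ext hnorm) (Subtype.ext (show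
        ‖((t : ℝ)) • (s : E)‖⁻¹ • (((t : ℝ)) • (s : E)) = (s : E) by
          rw [hnorm, smul_smul, inv_mul_cancel₀ htne, one_smul])))
  have hg'cont : Continuous g'fun := by
    rw [hquot.continuous_iff, hkey]
    exact hFcont
  refine ⟨⟨g'fun, hg'cont⟩, ?_⟩
  intro x
  have hs1 : ‖(x : E)‖ = 1 := mem_sphere_zero_iff_norm.mp x.2
  have hx0 : (x : E) ≠ 0 := by
    intro hh; rw [hh, norm_zero] at hs1; norm_num at hs1
  show g'fun ((sphereInclusion n) x) = g x
  rw [hg'def]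
  have this' : ((sphereInclusion n x : closedBall (0 : E) 1) : E) = (x : E) := rfl
  have hx0' : ((sphereInclusion n x : closedBall (0 : E) 1) : E) ≠ 0 := fun hh => hx0 (this' ▸ hh)
  simp only [dif_neg hx0']
  rw [← hF1 x]
  refine congrArg F (Prod.ext (Subtype.ext ?_) (Subtype.ext ?_))
  · show ‖((sphereInclusion n x : closedBall (0 : E) 1) : E)‖ = ((1 : unitInterval) : ℝ)
    rw [this', hs1]; rfl
  · show ‖((sphereInclusion n x : closedBall (0 : E) 1) : E)‖⁻¹ •
      ((sphereInclusion n x : closedBall (0 : E) 1) : E) = (x : E)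
    rw [this', hs1, inv_one, one_smul]
end

section
/- Let Z be a smooth (C^∞) finite-dimensional manifold without boundary that is Hausdorff and second countable. Then there exist an open neighborhood W of the diagonal {(z, z) : z ∈ Z} in the product manifold Z × Z and a smooth map α : ℝ × (Z × Z) → Z, defined and smooth on an open subset of ℝ × (Z × Z) containing [0,1] × W, such that for all (z, z') ∈ W one has α(0, z, z') = z and α(1, z, z') = z', and for all t ∈ [0,1] and z ∈ Z with (z,z) ∈ W one has α(t, z, z) = z. -/
open scoped Manifold
open Set Function Filter

noncomputable section

namespace SmoothInterp

variable {d : ℕ} {Z : Type*} [TopologicalSpace Z]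
  [ChartedSpace (EuclideanSpace ℝ (Fin d)) Z] [IsManifold (𝓡 d) (⊤ : ℕ∞) Z]
  [T2Space Z]

variable {ι : Type*}

open scoped Classical

/-- Partial inverse of an encoding `enc : ι → ℕ`. -/
def pinv (enc : ι → ℕ) (n : ℕ) : Option ι :=
  if h : ∃ i, enc i = n then some h.choose else none

lemma pinv_eq_some {enc : ι → ℕ} {n : ℕ} {i : ι} (h : pinv enc n = some i) : enc i = n := by
  by_cases hh : ∃ j, enc j = n
  · rw [pinv, dif_pos hh] at h
    exact (Option.some.inj h) ▸ hh.choose_spec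
  · rw [pinv, dif_neg hh] at h
    exact absurd h (by simp)

lemma pinv_enc {enc : ι → ℕ} (hinj : Injective enc) (i : ι) : pinv enc (enc i) = some i := by
  have h : ∃ j, enc j = enc i := ⟨i, rfl⟩
  simp only [pinv, dif_pos h, Option.some.injEq]
  exact hinj h.choose_spec

variable (f : SmoothBumpCovering ι (𝓡 d) Z) (enc : ι → ℕ)

/-- One guarded chart-wise straight-line move. -/
def bstep (i : ι) (t : ℝ) (z z' x : Z) : Z :=
  if f i z = 0 then x else
    (extChartAt (𝓡 d) (f.c i)).symm
      ((1 - t * f i z) • extChartAt (𝓡 d) (f.c i) x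
        + (t * f i z) • extChartAt (𝓡 d) (f.c i) z')

/-- Iterated composition of the guarded moves. -/
def bseq : ℕ → ℝ × Z × Z → Z
  | 0 => fun p => p.2.1
  | (n+1) => fun p =>
    match pinv enc n with
    | none => bseq n p
    | some i => bstep f i p.1 p.2.1 p.2.2 (bseq n p)

lemma mem_src_of_ne {i : ι} {z : Z} (hz : f i z ≠ 0) :
    z ∈ (extChartAt (𝓡 d) (f.c i)).source :=
  (f i).tsupport_subset_extChartAt_source (subset_tsupport _ (mem_support.2 hz))

lemma bseq_zero (n : ℕ) (z z' : Z) : bseq f enc n (0, z, z') = z := by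
  induction n with
  | zero => rfl
  | succ n ih =>
    cases hinv : pinv enc n with
    | none => simp only [bseq, hinv]; exact ih
    | some i =>
      simp only [bseq, hinv, ih]
      by_cases hz : f i z = 0
      · rw [bstep, if_pos hz]
      · rw [bstep, if_neg hz]
        simp only [zero_mul, sub_zero, one_smul, zero_smul, add_zero]
        exact (extChartAt (𝓡 d) (f.c i)).left_inv (mem_src_of_ne f hz)

lemma bseq_diag (n : ℕ) (t : ℝ) (z : Z) : bseq f enc n (t, z, z) = z := by
  induction n with
  | zero => rfl
  | succ n ih =>
    cases hinv : pinv enc n with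
    | none => simp only [bseq, hinv]; exact ih
    | some i =>
      simp only [bseq, hinv, ih]
      by_cases hz : f i z = 0
      · rw [bstep, if_pos hz]
      · rw [bstep, if_neg hz]
        rw [← add_smul, sub_add_cancel, one_smul]
        exact (extChartAt (𝓡 d) (f.c i)).left_inv (mem_src_of_ne f hz)

lemma bseq_ge {p : ℝ × Z × Z} {N : ℕ}
    (h : ∀ i, f i p.2.1 ≠ 0 → enc i < N) :
    ∀ m, N ≤ m → bseq f enc m p = bseq f enc N p := by
  intro m hm
  induction m, hm using Nat.le_induction with
  | base => rfl
  | succ m hm ih =>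
    cases hinv : pinv enc m with
    | none => simp only [bseq, hinv]; exact ih
    | some i =>
      have hz : f i p.2.1 = 0 := by
        by_contra hne
        have h1 := h i hne
        have h2 := pinv_eq_some hinv
        omega
      simp only [bseq, hinv, bstep, if_pos hz]
      exact ih

/-- The interpolation map. -/
def binterp (p : ℝ × Z × Z) : Z :=
  bseq f enc ((f.locallyFinite.point_finite p.2.1).toFinset.sup enc + 1) p

lemma binterp_eq {p : ℝ × Z × Z} {N : ℕ}
    (h : ∀ i, f i p.2.1 ≠ 0 → enc i < N) :
    binterp f enc p = bseq f enc N p := by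
  set K := (f.locallyFinite.point_finite p.2.1).toFinset.sup enc + 1 with hK
  have hKb : ∀ i, f i p.2.1 ≠ 0 → enc i < K := by
    intro i hi
    have hmem : i ∈ (f.locallyFinite.point_finite p.2.1).toFinset := by
      rw [Set.Finite.mem_toFinset]; exact mem_support.2 hi
    have := Finset.le_sup (f := enc) hmem
    omega
  have h1 := bseq_ge f enc hKb (max K N) (le_max_left _ _)
  have h2 := bseq_ge f enc h (max K N) (le_max_right _ _)
  calc binterp f enc p = bseq f enc K p := rfl
    _ = bseq f enc (max K N) p := h1.symm
    _ = bseq f enc N p := h2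

lemma bseq_one (hinj : Injective enc) {z z' : Z} {N : ℕ} {i₀ : ι}
    (h1 : f i₀ z = 1)
    (hz' : ∀ i, f i z ≠ 0 → z' ∈ (extChartAt (𝓡 d) (f.c i)).source)
    (hlt : enc i₀ < N) :
    bseq f enc N (1, z, z') = z' := by
  have hne : f i₀ z ≠ 0 := by rw [h1]; exact one_ne_zero
  have base : bseq f enc (enc i₀ + 1) (1, z, z') = z' := by
    have hinv := pinv_enc hinj i₀
    simp only [bseq, hinv]
    rw [bstep, if_neg hne, h1]
    simp only [mul_one, one_mul, sub_self, zero_smul, zero_add, one_smul]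
    exact (extChartAt (𝓡 d) (f.c i₀)).left_inv (hz' i₀ hne)
  have main : ∀ m, enc i₀ + 1 ≤ m → bseq f enc m (1, z, z') = z' := by
    intro m hm
    induction m, hm using Nat.le_induction with
    | base => exact base
    | succ m hm ih =>
      cases hinv : pinv enc m with
      | none => simp only [bseq, hinv]; exact ih
      | some i =>
        by_cases hz : f i z = 0
        · simp only [bseq, hinv, bstep, if_pos hz]; exact ih
        · simp only [bseq, hinv, ih]
          rw [bstep, if_neg hz, ← add_smul, sub_add_cancel, one_smul]
          exact (extChartAt (𝓡 d) (f.c i)).left_inv (hz' i hz)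
  exact main N hlt

lemma bseq_smooth (n : ℕ) (t0 : ℝ) (z0 : Z) :
    ∃ O : Set (ℝ × Z × Z), IsOpen O ∧ (t0, z0, z0) ∈ O ∧
      ContMDiffOn (𝓘(ℝ, ℝ).prod ((𝓡 d).prod (𝓡 d))) (𝓡 d) (⊤ : ℕ∞) (bseq f enc n) O := by
  induction n with
  | zero =>
    exact ⟨univ, isOpen_univ, mem_univ _,
      (contMDiff_fst.comp contMDiff_snd).contMDiffOn⟩
  | succ n ih =>
    obtain ⟨O, hOo, hO0, hOs⟩ := ih
    cases hinv : pinv enc n with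
    | none =>
      refine ⟨O, hOo, hO0, hOs.congr fun p _ => ?_⟩
      simp only [bseq, hinv]
    | some i =>
      by_cases hts : z0 ∈ tsupport (f i)
      · -- the interesting case
        set c := f.c i with hc
        set e := extChartAt (𝓡 d) c with he
        have hsrc0 : z0 ∈ e.source := (f i).tsupport_subset_extChartAt_source hts
        have hdiag : bseq f enc n (t0, z0, z0) = z0 := bseq_diag f enc n t0 z0
        have hθ : ContMDiff (𝓘(ℝ, ℝ).prod ((𝓡 d).prod (𝓡 d))) 𝓘(ℝ, ℝ) (⊤ : ℕ∞)
            (fun p : ℝ × Z × Z => p.1 * f i p.2.1) :=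
          contMDiff_fst.mul ((f i).contMDiff.comp (contMDiff_fst.comp contMDiff_snd))
        set O1 : Set (ℝ × Z × Z) :=
          (O ∩ bseq f enc n ⁻¹' e.source) ∩ {p : ℝ × Z × Z | p.2.2 ∈ e.source} with hO1
        have hO1o : IsOpen O1 :=
          (hOs.continuousOn.isOpen_inter_preimage hOo (isOpen_extChartAt_source c)).inter
            ((isOpen_extChartAt_source c).preimage (continuous_snd.snd))
        have hO1m : (t0, z0, z0) ∈ O1 :=
          ⟨⟨hO0, by simp only [mem_preimage, hdiag]; exact hsrc0⟩, hsrc0⟩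
        have hO1sub : O1 ⊆ O := fun p hp => hp.1.1
        set g : ℝ × Z × Z → EuclideanSpace ℝ (Fin d) := fun p =>
          (1 - p.1 * f i p.2.1) • e (bseq f enc n p)
            + (p.1 * f i p.2.1) • e p.2.2 with hg
        have hxs : ContMDiffOn (𝓘(ℝ, ℝ).prod ((𝓡 d).prod (𝓡 d)))
            𝓘(ℝ, EuclideanSpace ℝ (Fin d)) (⊤ : ℕ∞) (fun p => e (bseq f enc n p)) O1 := by
          refine ContMDiffOn.comp (contMDiffOn_extChartAt (x := c)) (hOs.mono hO1sub) ?_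
          intro p hp
          have := hp.1.2
          rwa [mem_preimage, ← extChartAt_source (𝓡 d)]
        have hz's : ContMDiffOn (𝓘(ℝ, ℝ).prod ((𝓡 d).prod (𝓡 d)))
            𝓘(ℝ, EuclideanSpace ℝ (Fin d)) (⊤ : ℕ∞) (fun p : ℝ × Z × Z => e p.2.2) O1 := by
          refine ContMDiffOn.comp (contMDiffOn_extChartAt (x := c))
            ((contMDiff_snd.comp contMDiff_snd).contMDiffOn) ?_
          intro p hp
          have := hp.2
          rwa [mem_preimage, ← extChartAt_source (𝓡 d)]
        have hgs : ContMDiffOn (𝓘(ℝ, ℝ).prod ((𝓡 d).prod (𝓡 d)))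
            𝓘(ℝ, EuclideanSpace ℝ (Fin d)) (⊤ : ℕ∞) g O1 :=
          ((contMDiffOn_const.sub hθ.contMDiffOn).smul hxs).add
            (hθ.contMDiffOn.smul hz's)
        set O2 : Set (ℝ × Z × Z) := O1 ∩ g ⁻¹' e.target with hO2
        have hO2o : IsOpen O2 :=
          hgs.continuousOn.isOpen_inter_preimage hO1o (isOpen_extChartAt_target c)
        have hO2m : (t0, z0, z0) ∈ O2 := by
          refine ⟨hO1m, ?_⟩
          have : g (t0, z0, z0) = e z0 := by
            simp only [hg, hdiag]
            rw [← add_smul, sub_add_cancel, one_smul]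
          simp only [mem_preimage, this]
          exact e.map_source hsrc0
        have hsym : ContMDiffOn 𝓘(ℝ, EuclideanSpace ℝ (Fin d)) (𝓡 d) (⊤ : ℕ∞) e.symm e.target :=
          contMDiffOn_extChartAt_symm c
        have hcomp : ContMDiffOn (𝓘(ℝ, ℝ).prod ((𝓡 d).prod (𝓡 d))) (𝓡 d) (⊤ : ℕ∞)
            (fun p => e.symm (g p)) O2 :=
          ContMDiffOn.comp hsym (hgs.mono inter_subset_left) inter_subset_right
        refine ⟨O2, hO2o, hO2m, hcomp.congr ?_⟩
        intro p hp
        simp only [bseq, hinv]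
        by_cases hz : f i p.2.1 = 0
        · rw [bstep, if_pos hz]
          have : g p = e (bseq f enc n p) := by
            simp only [hg, hz, mul_zero, sub_zero, one_smul, zero_smul, add_zero]
          rw [this]
          exact (e.left_inv hp.1.1.2).symm
        · rw [bstep, if_neg hz]
      · -- away from the support
        refine ⟨O ∩ {p : ℝ × Z × Z | p.2.1 ∈ (tsupport (f i))ᶜ},
          hOo.inter ((isClosed_tsupport _).isOpen_compl.preimage (continuous_fst.comp continuous_snd)),
          ⟨hO0, hts⟩, ?_⟩
        refine (hOs.mono inter_subset_left).congr fun p hp => ?_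
        have hz : f i p.2.1 = 0 := image_eq_zero_of_notMem_tsupport hp.2
        simp only [bseq, hinv, bstep, if_pos hz]

lemma binterp_zero (p : Z × Z) : binterp f enc (0, p) = p.1 :=
  bseq_zero f enc _ p.1 p.2

lemma binterp_diag (t : ℝ) (z : Z) : binterp f enc (t, z, z) = z :=
  bseq_diag f enc _ t z

end SmoothInterp

/-- On a smooth, Hausdorff, second countable, boundaryless manifold `Z` there exist an
open neighborhood `W` of the diagonal in `Z × Z` and a smooth interpolation map
`α : ℝ × (Z × Z) → Z`, smooth on an open set containing `[0,1] × W`, with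
`α(0, z, z') = z`, `α(1, z, z') = z'` for `(z, z') ∈ W`, and `α(t, z, z) = z` for all
`t ∈ [0,1]`. -/
theorem exists_smooth_interpolation {d : ℕ} {Z : Type*} [TopologicalSpace Z]
    [ChartedSpace (EuclideanSpace ℝ (Fin d)) Z] [IsManifold (𝓡 d) (⊤ : ℕ∞) Z]
    [T2Space Z] [SecondCountableTopology Z] :
    ∃ (W : Set (Z × Z)) (U : Set (ℝ × Z × Z)) (α : ℝ × Z × Z → Z),
      IsOpen W ∧ (∀ z : Z, (z, z) ∈ W) ∧ IsOpen U ∧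
      (Set.Icc (0 : ℝ) 1) ×ˢ W ⊆ U ∧
      ContMDiffOn (𝓘(ℝ, ℝ).prod ((𝓡 d).prod (𝓡 d))) (𝓡 d) (⊤ : ℕ∞) α U ∧
      (∀ p ∈ W, α (0, p) = p.1) ∧
      (∀ p ∈ W, α (1, p) = p.2) ∧
      (∀ t ∈ Set.Icc (0 : ℝ) 1, ∀ z : Z, (z, z) ∈ W → α (t, z, z) = z) := by
  classical
  have hLC : LocallyCompactSpace Z :=
    ChartedSpace.locallyCompactSpace (EuclideanSpace ℝ (Fin d)) Z
  have hSC : SigmaCompactSpace Z := inferInstance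
  obtain ⟨ι, f, -⟩ := SmoothBumpCovering.exists_isSubordinate (I := 𝓡 d)
    (s := (Set.univ : Set Z)) (U := fun _ => Set.univ) isClosed_univ
    (fun x _ => Filter.univ_mem)
  have hcnt : Countable ι :=
    Set.countable_univ_iff.mp
      (f.locallyFinite.countable_univ fun i => (f i).nonempty_support)
  obtain ⟨enc, hinj⟩ := exists_injective_nat ι
  -- local data around each point of the diagonal
  have hloc : ∀ z0 : Z, ∃ (Oa : Set Z) (N : ℕ), IsOpen Oa ∧ z0 ∈ Oa ∧
      (∀ z ∈ Oa, ∀ i, f i z ≠ 0 → enc i < N) ∧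
      (∀ z ∈ Oa, ∀ z' ∈ Oa, ∀ i, f i z ≠ 0 →
        z' ∈ (extChartAt (𝓡 d) (f.c i)).source) := by
    intro z0
    obtain ⟨V, hV, hVfin⟩ := f.locallyFinite z0
    set A : Finset ι := hVfin.toFinset with hA
    set A1 : Finset ι := A.filter (fun i => z0 ∈ tsupport (f i)) with hA1
    set Oa : Set Z := (interior V ∩ ⋂ i ∈ A1, (extChartAt (𝓡 d) (f.c i)).source)
        ∩ ⋂ i ∈ A.filter (fun i => z0 ∉ tsupport (f i)), (tsupport (f i))ᶜ with hOa
    have hOa_open : IsOpen Oa :=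
      (isOpen_interior.inter
          (isOpen_biInter_finset fun i _ => isOpen_extChartAt_source _)).inter
        (isOpen_biInter_finset fun i _ => (isClosed_tsupport _).isOpen_compl)
    have hz0 : z0 ∈ Oa := by
      refine ⟨⟨mem_interior_iff_mem_nhds.2 hV, ?_⟩, ?_⟩
      · exact Set.mem_iInter₂.2 fun i hi =>
          (f i).tsupport_subset_extChartAt_source (Finset.mem_filter.1 hi).2
      · exact Set.mem_iInter₂.2 fun i hi => (Finset.mem_filter.1 hi).2
    have hkey : ∀ z ∈ Oa, ∀ i, f i z ≠ 0 → i ∈ A1 := by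
      intro z hz i hi
      have hzV : z ∈ V := interior_subset hz.1.1
      have hiA : i ∈ A := by
        rw [hA, Set.Finite.mem_toFinset]
        exact ⟨z, Function.mem_support.2 hi, hzV⟩
      by_cases hts : z0 ∈ tsupport (f i)
      · exact Finset.mem_filter.2 ⟨hiA, hts⟩
      · exfalso
        have hcomp : z ∈ (tsupport (f i))ᶜ :=
          Set.mem_iInter₂.1 hz.2 i (Finset.mem_filter.2 ⟨hiA, hts⟩)
        exact hcomp (subset_tsupport _ (Function.mem_support.2 hi))
    refine ⟨Oa, A1.sup enc + 1, hOa_open, hz0, ?_, ?_⟩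
    · intro z hz i hi
      have := Finset.le_sup (f := enc) (hkey z hz i hi)
      omega
    · intro z hz z' hz' i hi
      exact Set.mem_iInter₂.1 hz'.1.2 i (hkey z hz i hi)
  choose Oa N hOpen hmem hbound hsrc using hloc
  -- t = 1 endpoint on the good squares
  have hone : ∀ z0 : Z, ∀ p : Z × Z, p.1 ∈ Oa z0 → p.2 ∈ Oa z0 →
      SmoothInterp.binterp f enc (1, p) = p.2 := by
    intro z0 p hp1 hp2
    have hb : ∀ i, f i p.1 ≠ 0 → enc i < N z0 := hbound z0 p.1 hp1
    rw [SmoothInterp.binterp_eq f enc hb]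
    have hne : f (f.ind p.1 (Set.mem_univ _)) p.1 ≠ 0 := by
      rw [f.apply_ind p.1 (Set.mem_univ _)]; exact one_ne_zero
    exact SmoothInterp.bseq_one f enc hinj (f.apply_ind p.1 (Set.mem_univ _))
      (fun i hi => hsrc z0 p.1 hp1 p.2 hp2 i hi) (hb _ hne)
  -- the open set of smoothness
  set U : Set (ℝ × Z × Z) := {q | ∃ O : Set (ℝ × Z × Z), IsOpen O ∧ q ∈ O ∧
    ContMDiffOn (𝓘(ℝ, ℝ).prod ((𝓡 d).prod (𝓡 d))) (𝓡 d) (⊤ : ℕ∞)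
      (SmoothInterp.binterp f enc) O} with hU
  have hUopen : IsOpen U := by
    rw [isOpen_iff_mem_nhds]
    rintro q ⟨O, hOo, hqO, hOs⟩
    exact Filter.mem_of_superset (hOo.mem_nhds hqO) fun q' hq' => ⟨O, hOo, hq', hOs⟩
  have hUsmooth : ContMDiffOn (𝓘(ℝ, ℝ).prod ((𝓡 d).prod (𝓡 d))) (𝓡 d) (⊤ : ℕ∞)
      (SmoothInterp.binterp f enc) U := by
    rintro q ⟨O, hOo, hqO, hOs⟩
    exact ((hOs q hqO).contMDiffAt (hOo.mem_nhds hqO)).contMDiffWithinAt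
  have hdiagU : ∀ z0 : Z, ∀ t0 : ℝ, (t0, z0, z0) ∈ U := by
    intro z0 t0
    obtain ⟨O, hOo, hOm, hOs⟩ := SmoothInterp.bseq_smooth f enc (N z0) t0 z0
    refine ⟨O ∩ Set.univ ×ˢ (Oa z0 ×ˢ Set.univ),
      hOo.inter (isOpen_univ.prod ((hOpen z0).prod isOpen_univ)),
      ⟨hOm, ⟨Set.mem_univ _, hmem z0, Set.mem_univ _⟩⟩, ?_⟩
    refine (hOs.mono Set.inter_subset_left).congr fun p hp => ?_
    exact SmoothInterp.binterp_eq f enc (hbound z0 p.2.1 hp.2.2.1)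
  -- tube lemma around each diagonal point
  have htube : ∀ z0 : Z, ∃ T : Set (Z × Z), IsOpen T ∧ (z0, z0) ∈ T ∧
      Set.Icc (0 : ℝ) 1 ×ˢ T ⊆ U ∧ T ⊆ Oa z0 ×ˢ Oa z0 := by
    intro z0
    have hsub : Set.Icc (0 : ℝ) 1 ×ˢ ({(z0, z0)} : Set (Z × Z)) ⊆ U := by
      rintro ⟨t, p⟩ ⟨ht, hp⟩
      rcases hp with rfl
      exact hdiagU z0 t
    obtain ⟨u, v, huo, hvo, hIcc, hsing, huv⟩ :=
      generalized_tube_lemma isCompact_Icc isCompact_singleton hUopen hsub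
    refine ⟨v ∩ Oa z0 ×ˢ Oa z0, hvo.inter ((hOpen z0).prod (hOpen z0)),
      ⟨hsing rfl, hmem z0, hmem z0⟩, ?_, Set.inter_subset_right⟩
    rintro ⟨t, p⟩ ⟨ht, hp⟩
    exact huv ⟨hIcc ht, hp.1⟩
  choose T hTo hTm hTU hTOa using htube
  refine ⟨⋃ z0, T z0, U, SmoothInterp.binterp f enc, isOpen_iUnion hTo,
    fun z => Set.mem_iUnion.2 ⟨z, hTm z⟩, hUopen, ?_, hUsmooth, ?_, ?_, ?_⟩
  · rintro ⟨t, p⟩ ⟨ht, hp⟩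
    obtain ⟨z0, hz0⟩ := Set.mem_iUnion.1 hp
    exact hTU z0 ⟨ht, hz0⟩
  · intro p _
    exact SmoothInterp.binterp_zero f enc p
  · intro p hp
    obtain ⟨z0, hz0⟩ := Set.mem_iUnion.1 hp
    have hOaOa := hTOa z0 hz0
    exact hone z0 p hOaOa.1 hOaOa.2
  · intro t _ z _
    exact SmoothInterp.binterp_diag f enc t z
end
end
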